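/- Let E and F be real inner product spaces, let W ⊆ E be a finite-dimensional subspace, let v₁, …, v_t ∈ E, let 0 ≤ ε ≤ 1/2, and let T : E → F be a linear map such that for every i ∈ {1,…,t}, T is an ε-isometry on the subspace W + span{vᵢ}. Then | Σ_{i=1}^t ‖P_{T(W)}(T vᵢ)‖² − Σ_{i=1}^t ‖P_W(vᵢ)‖² | ≤ 27ε · Σ_{i=1}^t ‖vᵢ‖², where P_W and P_{T(W)} denote the orthogonal projections onto W and onto the image subspace T(W), respectively. -/

import Mathlib

open scoped RealInnerProductSpace

private lemma pythag_proj {E : Type*} [NormedAddCommGroup E] [InnerProductSpace ℝ E]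
    (K : Submodule ℝ E) [K.HasOrthogonalProjection] (y : E) :
    ‖y‖ ^ 2 = ‖(Submodule.orthogonalProjection K y : E)‖ ^ 2 + ‖y - Submodule.orthogonalProjection K y‖ ^ 2 := by
  have h : ⟪y - (Submodule.orthogonalProjection K y : E), (Submodule.orthogonalProjection K y : E)⟫ = 0 :=
    Submodule.starProjection_inner_eq_zero y _ (Submodule.orthogonalProjection K y).2
  have h2 := norm_add_sq_real (Submodule.orthogonalProjection K y : E) (y - Submodule.orthogonalProjection K y)
  have h3 : (Submodule.orthogonalProjection K y : E) + (y - Submodule.orthogonalProjection K y) = y := by abel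
  rw [h3] at h2
  rw [real_inner_comm] at h
  rw [h2, h]
  ring

private lemma proj_min {E : Type*} [NormedAddCommGroup E] [InnerProductSpace ℝ E]
    (K : Submodule ℝ E) [K.HasOrthogonalProjection] (y x : E) (hx : x ∈ K) :
    ‖y - Submodule.orthogonalProjection K y‖ ≤ ‖y - x‖ := by
  set P := (Submodule.orthogonalProjection K y : E) with hP
  have horth : ⟪y - P, P - x⟫ = 0 :=
    Submodule.starProjection_inner_eq_zero y _ (K.sub_mem (Submodule.orthogonalProjection K y).2 hx)
  have h2 := norm_add_sq_real (y - P) (P - x)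
  have h3 : (y - P) + (P - x) = y - x := by abel
  rw [h3, horth] at h2
  nlinarith [norm_nonneg (y - P), norm_nonneg (y - x), norm_nonneg (P - x), sq_nonneg ‖P - x‖]

private lemma key_single {E F : Type*} [NormedAddCommGroup E] [InnerProductSpace ℝ E]
    [NormedAddCommGroup F] [InnerProductSpace ℝ F]
    (W : Submodule ℝ E) [FiniteDimensional ℝ W]
    (v : E) (ε : ℝ) (hε0 : 0 ≤ ε) (hε1 : ε ≤ 1 / 2)
    (T : E →ₗ[ℝ] F)
    (hT : ∀ w ∈ W ⊔ Submodule.span ℝ {v},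
      (1 - ε) * ‖w‖ ≤ ‖T w‖ ∧ ‖T w‖ ≤ (1 + ε) * ‖w‖) :
    |‖(Submodule.orthogonalProjection (W.map T) (T v) : F)‖ ^ 2
      - ‖(Submodule.orthogonalProjection W v : E)‖ ^ 2| ≤ 27 * ε * ‖v‖ ^ 2 := by
  set U := W ⊔ Submodule.span ℝ {v} with hU
  have hWU : W ≤ U := le_sup_left
  have hvU : v ∈ U := Submodule.mem_sup_right (Submodule.mem_span_singleton_self v)
  set p := (Submodule.orthogonalProjection W v : E) with hp
  set q := (Submodule.orthogonalProjection (W.map T) (T v) : F) with hq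
  have hpW : p ∈ W := (Submodule.orthogonalProjection W v).2
  obtain ⟨w₀, hw₀W, hw₀⟩ : ∃ w₀ ∈ W, T w₀ = q := (Submodule.orthogonalProjection (W.map T) (T v)).2
  -- Pythagoras
  have hA : ‖v‖ ^ 2 = ‖p‖ ^ 2 + ‖v - p‖ ^ 2 := pythag_proj W v
  have hB : ‖T v‖ ^ 2 = ‖q‖ ^ 2 + ‖T v - q‖ ^ 2 := pythag_proj (W.map T) (T v)
  -- bounds on ‖T v‖
  have hTv := hT v hvU
  -- upper bound on ‖T v - q‖
  have h1 : ‖T v - q‖ ≤ (1 + ε) * ‖v - p‖ := by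
    have hmin : ‖T v - q‖ ≤ ‖T v - T p‖ :=
      proj_min (W.map T) (T v) (T p) (Submodule.mem_map_of_mem hpW)
    have hsub : T v - T p = T (v - p) := by rw [map_sub]
    have hvp : v - p ∈ U := U.sub_mem hvU (hWU hpW)
    calc ‖T v - q‖ ≤ ‖T (v - p)‖ := by rwa [hsub] at hmin
      _ ≤ (1 + ε) * ‖v - p‖ := (hT _ hvp).2
  -- lower bound on ‖T v - q‖
  have h2 : (1 - ε) * ‖v - p‖ ≤ ‖T v - q‖ := by
    have hmin : ‖v - p‖ ≤ ‖v - w₀‖ := proj_min W v w₀ hw₀W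
    have hvw : v - w₀ ∈ U := U.sub_mem hvU (hWU hw₀W)
    have h := (hT _ hvw).1
    have hsub : T (v - w₀) = T v - q := by rw [map_sub, hw₀]
    rw [hsub] at h
    have hε1' : (0:ℝ) ≤ 1 - ε := by linarith
    calc (1 - ε) * ‖v - p‖ ≤ (1 - ε) * ‖v - w₀‖ := by nlinarith
      _ ≤ ‖T v - q‖ := h
  have hvp0 : (0:ℝ) ≤ ‖v - p‖ := norm_nonneg _
  have hTq0 : (0:ℝ) ≤ ‖T v - q‖ := norm_nonneg _
  have hv0 : (0:ℝ) ≤ ‖v‖ := norm_nonneg _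
  have hp0 : (0:ℝ) ≤ ‖p‖ := norm_nonneg _
  have hApos : ‖v - p‖ ^ 2 ≤ ‖v‖ ^ 2 := by nlinarith
  rw [abs_le]
  constructor <;> nlinarith [hTv.1, hTv.2, sq_nonneg ‖v - p‖, sq_nonneg ‖v‖,
    mul_nonneg hε0 (sq_nonneg ‖v‖), sq_nonneg ε, mul_nonneg hε0 hε0,
    mul_le_mul_of_nonneg_left hApos hε0]

/-- **Lemma 3 (Orthogonalizing the sketch, for matrix queries), coordinate-free form.**
Let `W` be a finite-dimensional subspace of a real inner product space `E`, let
`v₁, …, v_t ∈ E`, let `0 ≤ ε ≤ 1/2`, and let `T` be a linear map that is an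
`ε`-isometry on each subspace `W + span{vᵢ}`. Then
`| Σᵢ ‖P_{T(W)}(T vᵢ)‖² − Σᵢ ‖P_W(vᵢ)‖² | ≤ 27ε · Σᵢ ‖vᵢ‖²`. -/
theorem sketched_projection_frobenius_close
    {E F : Type*} [NormedAddCommGroup E] [InnerProductSpace ℝ E]
    [NormedAddCommGroup F] [InnerProductSpace ℝ F]
    (W : Submodule ℝ E) [FiniteDimensional ℝ W]
    {t : ℕ} (v : Fin t → E)
    (ε : ℝ) (hε0 : 0 ≤ ε) (hε1 : ε ≤ 1 / 2)
    (T : E →ₗ[ℝ] F)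
    (hT : ∀ i : Fin t, ∀ w ∈ W ⊔ Submodule.span ℝ {v i},
      (1 - ε) * ‖w‖ ≤ ‖T w‖ ∧ ‖T w‖ ≤ (1 + ε) * ‖w‖) :
    abs ((∑ i, ‖(Submodule.orthogonalProjection (W.map T) (T (v i)) : F)‖ ^ 2)
        - ∑ i, ‖(Submodule.orthogonalProjection W (v i) : E)‖ ^ 2)
      ≤ 27 * ε * ∑ i, ‖v i‖ ^ 2 := by
  rw [← Finset.sum_sub_distrib, Finset.mul_sum]
  calc |∑ i, (‖(Submodule.orthogonalProjection (W.map T) (T (v i)) : F)‖ ^ 2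
        - ‖(Submodule.orthogonalProjection W (v i) : E)‖ ^ 2)|
      ≤ ∑ i, |‖(Submodule.orthogonalProjection (W.map T) (T (v i)) : F)‖ ^ 2
        - ‖(Submodule.orthogonalProjection W (v i) : E)‖ ^ 2| := Finset.abs_sum_le_sum_abs _ _
    _ ≤ ∑ i, 27 * ε * ‖v i‖ ^ 2 := Finset.sum_le_sum fun i _ =>
        key_single W (v i) ε hε0 hε1 T (hT i)
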